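/- There exists a constant c > 0, depending only on λ and the norm bounds of V, H, R and C (but not on t), such that for all t ≥ 1 and all W₁, W₂ ∈ C: | (f̃_t(W₁) − f̃_{t+1}(W₁)) − (f̃_t(W₂) − f̃_{t+1}(W₂)) | ≤ (c/(t+1)) ‖W₁ − W₂‖_F; that is, the difference function f̃_t − f̃_{t+1} is Lipschitz on C with constant c/(t+1). -/

import Mathlib

open MeasureTheory ProbabilityTheory Filter
open scoped BigOperators

noncomputable section

/-- Vectors in `ℝ^n` with the Euclidean (`ℓ₂`) norm. -/
abbrev Vec (n : ℕ) := EuclideanSpace ℝ (Fin n)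

/-- `F × K` real matrices, normed with the Frobenius norm (Euclidean norm on entries). -/
abbrev Mat (F K : ℕ) := EuclideanSpace ℝ (Fin F × Fin K)

/-- Matrix-vector product `W h`. -/
def matVec {F K : ℕ} (W : Mat F K) (h : Vec K) : Vec F :=
  (WithLp.equiv 2 _).symm (fun i => ∑ j, W (i, j) * h j)

/-- The `ℓ₁` norm of a vector. -/
def l1norm {n : ℕ} (v : Vec n) : ℝ := ∑ i, |v i|

/-- The constraint set `C`: nonnegative matrices whose columns have Euclidean norm at most 1. -/
def Cset (F K : ℕ) : Set (Mat F K) :=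
  {W | (∀ p, 0 ≤ W p) ∧ ∀ j : Fin K, Real.sqrt (∑ i, (W (i, j))^2) ≤ 1}

/-- The constraint set `R = {r : ‖r‖_∞ ≤ M}`. -/
def Rset (F : ℕ) (M : ℝ) : Set (Vec F) := {r | ∀ i, |r i| ≤ M}

/-- `ℓ̃(v, W, h, r) = (1/2) ‖v − W h − r‖₂² + λ ‖r‖₁`. -/
def elltilde {F K : ℕ} (lam : ℝ) (v : Vec F) (W : Mat F K) (h : Vec K) (r : Vec F) : ℝ :=
  (1/2) * ‖v - matVec W h - r‖^2 + lam * l1norm r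

/-- `ℓ(v, W) = min_{(h,r) ∈ H × R} ℓ̃(v, W, h, r)`. -/
def ell {F K : ℕ} (lam : ℝ) (Hs : Set (Vec K)) (Rs : Set (Vec F)) (v : Vec F) (W : Mat F K) : ℝ :=
  sInf ((fun p : Vec K × Vec F => elltilde lam v W p.1 p.2) '' (Hs ×ˢ Rs))

/-- The surrogate `f̃_t(W) = (1/t) ∑_{i=1}^t [(1/2)‖v_i − W h_i − r_i‖₂² + λ‖r_i‖₁]`. -/
def ftilde {F K : ℕ} (lam : ℝ) (v : ℕ → Vec F) (h : ℕ → Vec K) (r : ℕ → Vec F)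
    (t : ℕ) (W : Mat F K) : ℝ :=
  (t : ℝ)⁻¹ * ∑ i ∈ Finset.Icc 1 t, ((1/2) * ‖v i - matVec W (h i) - r i‖^2 + lam * l1norm (r i))

/-- The empirical loss `f_t(W) = (1/t) ∑_{i=1}^t ℓ(v_i, W)`. -/
def femp {F K : ℕ} (lam : ℝ) (Hs : Set (Vec K)) (Rs : Set (Vec F)) (v : ℕ → Vec F)
    (t : ℕ) (W : Mat F K) : ℝ :=
  (t : ℝ)⁻¹ * ∑ i ∈ Finset.Icc 1 t, ell lam Hs Rs (v i) W

lemma matVec_apply {F K : ℕ} (W : Mat F K) (h : Vec K) (i : Fin F) :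
    matVec W h i = ∑ j, W (i, j) * h j := rfl

lemma matVec_sub {F K : ℕ} (W₁ W₂ : Mat F K) (h : Vec K) :
    matVec W₁ h - matVec W₂ h = matVec (W₁ - W₂) h := by
  ext i
  simp [matVec_apply, sub_mul, Finset.sum_sub_distrib]

lemma norm_matVec_le {F K : ℕ} (W : Mat F K) (h : Vec K) :
    ‖matVec W h‖ ≤ ‖W‖ * ‖h‖ := by
  have hsq : ‖matVec W h‖ ^ 2 ≤ (‖W‖ * ‖h‖) ^ 2 := by
    rw [PiLp.norm_sq_eq_of_L2, mul_pow, PiLp.norm_sq_eq_of_L2, PiLp.norm_sq_eq_of_L2]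
    simp only [Real.norm_eq_abs, sq_abs]
    rw [Fintype.sum_prod_type, Finset.sum_mul]
    refine Finset.sum_le_sum fun i _ => ?_
    calc (matVec W h i) ^ 2 = (∑ j, W (i, j) * h j) ^ 2 := by rw [matVec_apply]
      _ ≤ (∑ j, W (i, j) ^ 2) * ∑ j, h j ^ 2 :=
          Finset.sum_mul_sq_le_sq_mul_sq _ _ _
  calc ‖matVec W h‖ = Real.sqrt (‖matVec W h‖ ^ 2) := by
        rw [Real.sqrt_sq (norm_nonneg _)]
    _ ≤ Real.sqrt ((‖W‖ * ‖h‖) ^ 2) := Real.sqrt_le_sqrt hsq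
    _ = ‖W‖ * ‖h‖ := Real.sqrt_sq (by positivity)

lemma norm_le_sqrt_of_mem_Cset {F K : ℕ} {W : Mat F K} (hW : W ∈ Cset F K) :
    ‖W‖ ≤ Real.sqrt K := by
  have hsq : ‖W‖ ^ 2 ≤ (K : ℝ) := by
    rw [PiLp.norm_sq_eq_of_L2]
    simp only [Real.norm_eq_abs, sq_abs]
    rw [Fintype.sum_prod_type_right]
    calc (∑ j : Fin K, ∑ i : Fin F, W (i, j) ^ 2) ≤ ∑ _j : Fin K, (1 : ℝ) := by
          refine Finset.sum_le_sum fun j _ => ?_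
          have h1 := hW.2 j
          have hnn : (0 : ℝ) ≤ ∑ i, W (i, j) ^ 2 :=
            Finset.sum_nonneg fun i _ => sq_nonneg _
          nlinarith [Real.sq_sqrt hnn, Real.sqrt_nonneg (∑ i, W (i, j) ^ 2)]
      _ = (K : ℝ) := by simp
  calc ‖W‖ = Real.sqrt (‖W‖ ^ 2) := by
        rw [Real.sqrt_sq (norm_nonneg _)]
    _ ≤ Real.sqrt K := Real.sqrt_le_sqrt hsq

/-- there is a constant `c > 0`, depending only on `λ` and the norm
bounds of `V`, `H`, `R` and `C` (not on `t` or on the particular sequences), such that for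
all `t ≥ 1` the difference function `f̃_t − f̃_{t+1}` is Lipschitz on `C` with constant
`c/(t+1)`. -/
theorem surrogate_difference_lipschitz
    (F K : ℕ) (hF : 1 ≤ F) (hK : 1 ≤ K)
    (lam : ℝ) (hlam : 0 < lam)
    (Vs : Set (Vec F)) (Hs : Set (Vec K)) (Rs : Set (Vec F))
    (hVb : Bornology.IsBounded Vs) (hHb : Bornology.IsBounded Hs)
    (hRb : Bornology.IsBounded Rs) :
    ∃ c : ℝ, 0 < c ∧
      ∀ (v : ℕ → Vec F) (h : ℕ → Vec K) (r : ℕ → Vec F),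
        (∀ i, 1 ≤ i → v i ∈ Vs) → (∀ i, 1 ≤ i → h i ∈ Hs) → (∀ i, 1 ≤ i → r i ∈ Rs) →
        ∀ t, 1 ≤ t → ∀ W₁ ∈ Cset F K, ∀ W₂ ∈ Cset F K,
          |(ftilde lam v h r t W₁ - ftilde lam v h r (t+1) W₁)
              - (ftilde lam v h r t W₂ - ftilde lam v h r (t+1) W₂)|
            ≤ c / (t+1) * ‖W₁ - W₂‖ := by
  obtain ⟨Bv, hBv⟩ := isBounded_iff_forall_norm_le.mp hVb
  obtain ⟨Bh, hBh⟩ := isBounded_iff_forall_norm_le.mp hHb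
  obtain ⟨Br, hBr⟩ := isBounded_iff_forall_norm_le.mp hRb
  set Bv' := max Bv 0 with hBv'def
  set Bh' := max Bh 0 with hBh'def
  set Br' := max Br 0 with hBr'def
  have hBv'0 : 0 ≤ Bv' := le_max_right _ _
  have hBh'0 : 0 ≤ Bh' := le_max_right _ _
  have hBr'0 : 0 ≤ Br' := le_max_right _ _
  set L := Bh' * (Bv' + Real.sqrt K * Bh' + Br') with hLdef
  have hL0 : 0 ≤ L := by positivity
  refine ⟨2 * L + 1, by positivity, ?_⟩
  intro v h r hv hh hr t ht W₁ hW₁ W₂ hW₂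
  set g : ℕ → Mat F K → ℝ := fun i W =>
    (1/2) * ‖v i - matVec W (h i) - r i‖^2 + lam * l1norm (r i) with hgdef
  -- per-term Lipschitz bound
  have key : ∀ i, 1 ≤ i → |g i W₁ - g i W₂| ≤ L * ‖W₁ - W₂‖ := by
    intro i hi
    have hvn : ‖v i‖ ≤ Bv' := le_trans (hBv _ (hv i hi)) (le_max_left _ _)
    have hhn : ‖h i‖ ≤ Bh' := le_trans (hBh _ (hh i hi)) (le_max_left _ _)
    have hrn : ‖r i‖ ≤ Br' := le_trans (hBr _ (hr i hi)) (le_max_left _ _)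
    set a₁ := v i - matVec W₁ (h i) - r i with ha₁
    set a₂ := v i - matVec W₂ (h i) - r i with ha₂
    have hdiff : a₁ - a₂ = matVec (W₂ - W₁) (h i) := by
      rw [ha₁, ha₂, ← matVec_sub]
      abel
    have hnd : ‖a₁ - a₂‖ ≤ Bh' * ‖W₁ - W₂‖ := by
      rw [hdiff]
      calc ‖matVec (W₂ - W₁) (h i)‖ ≤ ‖W₂ - W₁‖ * ‖h i‖ := norm_matVec_le _ _
        _ = ‖W₁ - W₂‖ * ‖h i‖ := by rw [norm_sub_rev]
        _ ≤ ‖W₁ - W₂‖ * Bh' := by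
            exact mul_le_mul_of_nonneg_left hhn (norm_nonneg _)
        _ = Bh' * ‖W₁ - W₂‖ := mul_comm _ _
    have hbound : ∀ (W : Mat F K), W ∈ Cset F K →
        ‖v i - matVec W (h i) - r i‖ ≤ Bv' + Real.sqrt K * Bh' + Br' := by
      intro W hW
      calc ‖v i - matVec W (h i) - r i‖
          ≤ ‖v i - matVec W (h i)‖ + ‖r i‖ := norm_sub_le _ _
        _ ≤ (‖v i‖ + ‖matVec W (h i)‖) + ‖r i‖ := by
            exact add_le_add (norm_sub_le _ _) le_rfl
        _ ≤ (Bv' + Real.sqrt K * Bh') + Br' := by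
            refine add_le_add (add_le_add hvn ?_) hrn
            calc ‖matVec W (h i)‖ ≤ ‖W‖ * ‖h i‖ := norm_matVec_le _ _
              _ ≤ Real.sqrt K * Bh' :=
                  mul_le_mul (norm_le_sqrt_of_mem_Cset hW) hhn (norm_nonneg _)
                    (Real.sqrt_nonneg _)
    have h₁ := hbound W₁ hW₁
    have h₂ := hbound W₂ hW₂
    have hexp : g i W₁ - g i W₂ = (1/2) * (‖a₁‖ - ‖a₂‖) * (‖a₁‖ + ‖a₂‖) := by
      have e1 : g i W₁ = (1/2) * ‖a₁‖^2 + lam * l1norm (r i) := rfl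
      have e2 : g i W₂ = (1/2) * ‖a₂‖^2 + lam * l1norm (r i) := rfl
      rw [e1, e2]; ring
    rw [hexp]
    have habs : |‖a₁‖ - ‖a₂‖| ≤ ‖a₁ - a₂‖ := abs_norm_sub_norm_le _ _
    have hs : ‖a₁‖ + ‖a₂‖ ≤ 2 * (Bv' + Real.sqrt K * Bh' + Br') := by
      rw [ha₁, ha₂]; linarith
    have hs0 : 0 ≤ ‖a₁‖ + ‖a₂‖ := by positivity
    calc |(1/2) * (‖a₁‖ - ‖a₂‖) * (‖a₁‖ + ‖a₂‖)|
        = (1/2) * |‖a₁‖ - ‖a₂‖| * (‖a₁‖ + ‖a₂‖) := by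
          rw [abs_mul, abs_mul, abs_of_nonneg hs0]
          norm_num
      _ ≤ (1/2) * (Bh' * ‖W₁ - W₂‖) * (2 * (Bv' + Real.sqrt K * Bh' + Br')) := by
          refine mul_le_mul ?_ hs hs0 (by positivity)
          exact mul_le_mul_of_nonneg_left (habs.trans hnd) (by norm_num)
      _ = L * ‖W₁ - W₂‖ := by rw [hLdef]; ring
  -- rewrite the difference
  set A := ∑ i ∈ Finset.Icc 1 t, g i W₁ with hA
  set B := ∑ i ∈ Finset.Icc 1 t, g i W₂ with hB
  have hsplit : ∀ W : Mat F K, ∑ i ∈ Finset.Icc 1 (t+1), g i W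
      = (∑ i ∈ Finset.Icc 1 t, g i W) + g (t+1) W := by
    intro W
    rw [← Finset.insert_Icc_right_eq_Icc_add_one (by omega : 1 ≤ t + 1),
      Finset.sum_insert (by simp)]
    ring
  have htR : (1:ℝ) ≤ (t:ℝ) := by exact_mod_cast ht
  have ht0 : (0:ℝ) < (t:ℝ) := by linarith
  have ht1 : (0:ℝ) < (t:ℝ) + 1 := by linarith
  have hrw : (ftilde lam v h r t W₁ - ftilde lam v h r (t+1) W₁)
      - (ftilde lam v h r t W₂ - ftilde lam v h r (t+1) W₂)
      = ((t:ℝ) * ((t:ℝ)+1))⁻¹ * (A - B) - ((t:ℝ)+1)⁻¹ * (g (t+1) W₁ - g (t+1) W₂) := by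
    unfold ftilde
    rw [show ∑ i ∈ Finset.Icc 1 t,
          ((1/2) * ‖v i - matVec W₁ (h i) - r i‖^2 + lam * l1norm (r i)) = A from rfl,
      show ∑ i ∈ Finset.Icc 1 t,
          ((1/2) * ‖v i - matVec W₂ (h i) - r i‖^2 + lam * l1norm (r i)) = B from rfl,
      show ∑ i ∈ Finset.Icc 1 (t+1),
          ((1/2) * ‖v i - matVec W₁ (h i) - r i‖^2 + lam * l1norm (r i))
          = ∑ i ∈ Finset.Icc 1 (t+1), g i W₁ from rfl,
      show ∑ i ∈ Finset.Icc 1 (t+1),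
          ((1/2) * ‖v i - matVec W₂ (h i) - r i‖^2 + lam * l1norm (r i))
          = ∑ i ∈ Finset.Icc 1 (t+1), g i W₂ from rfl,
      hsplit W₁, hsplit W₂]
    push_cast
    field_simp
    ring
  have hAB : |A - B| ≤ (t:ℝ) * (L * ‖W₁ - W₂‖) := by
    rw [hA, hB, ← Finset.sum_sub_distrib]
    calc |∑ i ∈ Finset.Icc 1 t, (g i W₁ - g i W₂)|
        ≤ ∑ i ∈ Finset.Icc 1 t, |g i W₁ - g i W₂| := Finset.abs_sum_le_sum_abs _ _
      _ ≤ ∑ _i ∈ Finset.Icc 1 t, L * ‖W₁ - W₂‖ := by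
          refine Finset.sum_le_sum fun i hi => key i ?_
          exact (Finset.mem_Icc.mp hi).1
      _ = (t:ℝ) * (L * ‖W₁ - W₂‖) := by
          rw [Finset.sum_const, Nat.card_Icc]
          simp [nsmul_eq_mul]
  have hg1 : |g (t+1) W₁ - g (t+1) W₂| ≤ L * ‖W₁ - W₂‖ := key (t+1) (by omega)
  rw [hrw]
  calc |((t:ℝ) * ((t:ℝ)+1))⁻¹ * (A - B) - ((t:ℝ)+1)⁻¹ * (g (t+1) W₁ - g (t+1) W₂)|
      ≤ |((t:ℝ) * ((t:ℝ)+1))⁻¹ * (A - B)| + |((t:ℝ)+1)⁻¹ * (g (t+1) W₁ - g (t+1) W₂)| :=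
        abs_sub _ _
    _ = ((t:ℝ) * ((t:ℝ)+1))⁻¹ * |A - B| + ((t:ℝ)+1)⁻¹ * |g (t+1) W₁ - g (t+1) W₂| := by
        rw [abs_mul, abs_mul, abs_of_nonneg (by positivity : (0:ℝ) ≤ ((t:ℝ) * ((t:ℝ)+1))⁻¹),
          abs_of_nonneg (by positivity : (0:ℝ) ≤ ((t:ℝ)+1)⁻¹)]
    _ ≤ ((t:ℝ) * ((t:ℝ)+1))⁻¹ * ((t:ℝ) * (L * ‖W₁ - W₂‖)) + ((t:ℝ)+1)⁻¹ * (L * ‖W₁ - W₂‖) := by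
        refine add_le_add ?_ ?_
        · exact mul_le_mul_of_nonneg_left hAB (by positivity)
        · exact mul_le_mul_of_nonneg_left hg1 (by positivity)
    _ = 2 * L / ((t:ℝ)+1) * ‖W₁ - W₂‖ := by
        field_simp
        ring
    _ ≤ (2 * L + 1) / ((t:ℝ)+1) * ‖W₁ - W₂‖ := by
        gcongr
        linarith
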